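/- Let Ψ be a proper colouring of the exponential graph K_n^G (G loopless) with colour set containing {1,...,n}, such that Ψ(const_i) = i for every i ∈ {1,...,n}. Then for every vertex φ of K_n^G, either Ψ(φ) ∈ Im(φ) or Ψ(φ) ∉ {1,...,n}. -/

import Mathlib

open SimpleGraph

universe u v w

/-- The categorical (tensor) product of two simple graphs. -/
def tensorGraph {α : Type u} {β : Type v} (G : SimpleGraph α) (H : SimpleGraph β) :
    SimpleGraph (α × β) where
  Adj p q := G.Adj p.1 q.1 ∧ H.Adj p.2 q.2
  symm := ⟨fun p q h => ⟨h.1.symm, h.2.symm⟩⟩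
  loopless := ⟨fun p h => G.loopless.irrefl p.1 h.1⟩


/-- Adjacency of the exponential graph `K^G` (loops allowed). -/
def expAdj {α : Type u} {γ : Type w} (K : SimpleGraph γ) (G : SimpleGraph α)
    (f g : α → γ) : Prop :=
  ∀ ⦃x y : α⦄, G.Adj x y → K.Adj (f x) (g y)

/-- The exponential graph `K^G` as a simple graph (loops removed). -/
def expGraph {α : Type u} {γ : Type w} (K : SimpleGraph γ) (G : SimpleGraph α) :
    SimpleGraph (α → γ) where
  Adj f g := f ≠ g ∧ expAdj K G f g
  symm := ⟨fun f g h => ⟨h.1.symm, fun x y hxy => (h.2 hxy.symm).symm⟩⟩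
  loopless := ⟨fun f h => h.1 rfl⟩
theorem colour_in_image_or_outside {α : Type u} {C : Type w} [Nonempty α]
    (G : SimpleGraph α) (n : ℕ) (e : Fin n ↪ C) (Ψ : (α → Fin n) → C)
    (hproper : ∀ f g : α → Fin n,
      (expGraph (⊤ : SimpleGraph (Fin n)) G).Adj f g → Ψ f ≠ Ψ g)
    (hconst : ∀ i : Fin n, Ψ (Function.const α i) = e i) :
    ∀ φ : α → Fin n, Ψ φ ∈ e '' Set.range φ ∨ Ψ φ ∉ Set.range e := by
  intro φ
  by_cases h : Ψ φ ∈ Set.range e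
  · left
    obtain ⟨i, hi⟩ := h
    by_cases hiφ : i ∈ Set.range φ
    · exact ⟨i, hiφ, hi⟩
    · exfalso
      have hne : Function.const α i ≠ φ := by
        intro heq
        exact hiφ ⟨Classical.arbitrary α, by rw [← heq]; rfl⟩
      have hadj : (expGraph (⊤ : SimpleGraph (Fin n)) G).Adj (Function.const α i) φ := by
        refine ⟨hne, fun x y hxy => ?_⟩
        simp only [SimpleGraph.top_adj]
        intro hc
        exact hiφ ⟨y, hc.symm⟩
      exact hproper _ _ hadj (by rw [hconst, hi])
  · right; exact h
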